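/- Let u = (−1 + i√3)/2 ∈ ℂ, and let A₄ = [[1,0,0,0],[−3,1,0,0],[3,−2,1,0],[−1,1,−1,1]], B₄ = [[1,u,u²,u³],[0,1,2u,3u²],[0,0,1,3u],[0,0,0,1]] in SL(4,ℂ). Then for every t ∈ ℂ with t ≠ 0 and t ≠ 1, det(I − t⁻¹·A₄·B₄⁻¹·A₄⁻¹ + A₄·B₄⁻¹·A₄⁻¹·B₄ − t·B₄ + B₄·A₄·B₄⁻¹·A₄⁻¹) divided by det(t·B₄ − I) equals (1/t⁴)·(t²−4t+1)². That is, the twisted Alexander invariant Δ_{K,ρ₄}(t) = (1/t⁴)(t²−4t+1)². -/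

import Mathlib

open Matrix

noncomputable def u41 : ℂ := (-1 + Complex.I * Real.sqrt 3) / 2

noncomputable def A4 : Matrix (Fin 4) (Fin 4) ℂ :=
  !![1, 0, 0, 0; -3, 1, 0, 0; 3, -2, 1, 0; -1, 1, -1, 1]

noncomputable def B4 : Matrix (Fin 4) (Fin 4) ℂ :=
  !![1, u41, u41 ^ 2, u41 ^ 3; 0, 1, 2 * u41, 3 * u41 ^ 2; 0, 0, 1, 3 * u41; 0, 0, 0, 1]

noncomputable def A4i : Matrix (Fin 4) (Fin 4) ℂ :=
  !![1, 0, 0, 0; 3, 1, 0, 0; 3, 2, 1, 0; 1, 1, 1, 1]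

noncomputable def B4i : Matrix (Fin 4) (Fin 4) ℂ :=
  !![1, -u41, u41 ^ 2, -u41 ^ 3; 0, 1, -2 * u41, 3 * u41 ^ 2; 0, 0, 1, -3 * u41; 0, 0, 0, 1]

lemma hu41 : u41 ^ 2 + u41 + 1 = 0 := by
  have hs : (Real.sqrt 3 : ℂ) ^ 2 = 3 := by
    rw [← Complex.ofReal_pow, Real.sq_sqrt (by norm_num : (0:ℝ) ≤ 3)]
    norm_num
  unfold u41
  linear_combination (Complex.I ^ 2 / 4) * hs + (3 / 4) * Complex.I_sq

lemma hu2 : u41 ^ 2 = -1 - u41 := by linear_combination hu41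
lemma hu3 : u41 ^ 3 = 1 := by linear_combination (u41 - 1) * hu41
lemma hu4 : u41 ^ 4 = u41 := by linear_combination (u41 ^ 2 - u41) * hu41
lemma hu5 : u41 ^ 5 = -1 - u41 := by linear_combination (u41 ^ 3 - u41 ^ 2 + 1) * hu41
lemma hu6 : u41 ^ 6 = 1 := by linear_combination (u41 ^ 4 - u41 ^ 3 + u41 - 1) * hu41

lemma one4 : (1 : Matrix (Fin 4) (Fin 4) ℂ) = !![1,0,0,0;0,1,0,0;0,0,1,0;0,0,0,1] := by
  ext i j; fin_cases i <;> fin_cases j <;>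
    simp [Matrix.one_apply, Matrix.vecHead, Matrix.vecTail]

lemma detfour (M : Matrix (Fin 4) (Fin 4) ℂ) :
    det M =
      M 0 0 * (M 1 1 * M 2 2 * M 3 3 - M 1 1 * M 2 3 * M 3 2 - M 1 2 * M 2 1 * M 3 3
        + M 1 2 * M 2 3 * M 3 1 + M 1 3 * M 2 1 * M 3 2 - M 1 3 * M 2 2 * M 3 1)
      - M 0 1 * (M 1 0 * M 2 2 * M 3 3 - M 1 0 * M 2 3 * M 3 2 - M 1 2 * M 2 0 * M 3 3
        + M 1 2 * M 2 3 * M 3 0 + M 1 3 * M 2 0 * M 3 2 - M 1 3 * M 2 2 * M 3 0)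
      + M 0 2 * (M 1 0 * M 2 1 * M 3 3 - M 1 0 * M 2 3 * M 3 1 - M 1 1 * M 2 0 * M 3 3
        + M 1 1 * M 2 3 * M 3 0 + M 1 3 * M 2 0 * M 3 1 - M 1 3 * M 2 1 * M 3 0)
      - M 0 3 * (M 1 0 * M 2 1 * M 3 2 - M 1 0 * M 2 2 * M 3 1 - M 1 1 * M 2 0 * M 3 2
        + M 1 1 * M 2 2 * M 3 0 + M 1 2 * M 2 0 * M 3 1 - M 1 2 * M 2 1 * M 3 0) := by
  rw [Matrix.det_succ_row_zero]
  simp [Fin.sum_univ_succ, Matrix.det_fin_three, Fin.succAbove,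
    show ((2:Fin 3).succ : Fin 4) = 3 from rfl, show (Fin.castSucc (2:Fin 3) : Fin 4) = 2 from rfl,
    show ((1:Fin 3).succ : Fin 4) = 2 from rfl, show ((0:Fin 3).succ : Fin 4) = 1 from rfl]
  ring

lemma hA4inv : A4⁻¹ = A4i := by
  apply inv_eq_right_inv
  rw [one4]
  ext i j
  fin_cases i <;> fin_cases j <;>
    (simp [A4, A4i, Matrix.mul_apply, Fin.sum_univ_four, Matrix.vecHead, Matrix.vecTail]; try ring)

lemma hB4inv : B4⁻¹ = B4i := by
  apply inv_eq_right_inv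
  rw [one4]
  ext i j
  fin_cases i <;> fin_cases j <;>
    (simp [B4, B4i, Matrix.mul_apply, Fin.sum_univ_four, Matrix.vecHead, Matrix.vecTail]; try ring)

noncomputable def P1x : Matrix (Fin 4) (Fin 4) ℂ :=
  !![(1), (-1) * u41, (1) * u41^2, (-1) * u41^3;
   (-3), (1) + (3) * u41, (-2) * u41 + (-3) * u41^2, (3) * u41^2 + (3) * u41^3;
   (3), (-2) + (-3) * u41, (1) + (4) * u41 + (3) * u41^2, (-3) * u41 + (-6) * u41^2 + (-3) * u41^3;
   (-1), (1) + (1) * u41, (-1) + (-2) * u41 + (-1) * u41^2, (1) + (3) * u41 + (3) * u41^2 + (1) * u41^3]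

noncomputable def P2x : Matrix (Fin 4) (Fin 4) ℂ :=
  !![(1) + (-3) * u41 + (3) * u41^2 + (-1) * u41^3, (-1) * u41 + (2) * u41^2 + (-1) * u41^3, (1) * u41^2 + (-1) * u41^3, (-1) * u41^3;
   (3) * u41 + (-6) * u41^2 + (3) * u41^3, (1) + (-1) * u41 + (-3) * u41^2 + (3) * u41^3, (-2) * u41 + (3) * u41^3, (3) * u41^2 + (3) * u41^3;
   (3) * u41^2 + (-3) * u41^3, (2) * u41 + (-3) * u41^3, (1) + (1) * u41 + (-3) * u41^2 + (-3) * u41^3, (-3) * u41 + (-6) * u41^2 + (-3) * u41^3;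
   (1) * u41^3, (1) * u41^2 + (1) * u41^3, (1) * u41 + (2) * u41^2 + (1) * u41^3, (1) + (3) * u41 + (3) * u41^2 + (1) * u41^3]

noncomputable def P3x : Matrix (Fin 4) (Fin 4) ℂ :=
  !![(1) + (-3) * u41 + (3) * u41^2 + (-1) * u41^3, (-1) * u41^2 + (2) * u41^3 + (-1) * u41^4, (1) * u41^4 + (-1) * u41^5, (-1) * u41^6;
   (3) * u41 + (-6) * u41^2 + (3) * u41^3, (1) + (-1) * u41 + (-3) * u41^3 + (3) * u41^4, (-2) * u41^2 + (3) * u41^5, (3) * u41^4 + (3) * u41^5 + (3) * u41^6;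
   (3) * u41^2 + (-3) * u41^3, (2) * u41 + (-3) * u41^4, (1) + (1) * u41 + (1) * u41^2 + (-3) * u41^3 + (-3) * u41^4 + (-3) * u41^5, (-3) * u41^2 + (-6) * u41^3 + (-9) * u41^4 + (-6) * u41^5 + (-3) * u41^6;
   (1) * u41^3, (1) * u41^2 + (1) * u41^3 + (1) * u41^4, (1) * u41 + (2) * u41^2 + (3) * u41^3 + (2) * u41^4 + (1) * u41^5, (1) + (3) * u41 + (6) * u41^2 + (7) * u41^3 + (6) * u41^4 + (3) * u41^5 + (1) * u41^6]

noncomputable def P4x : Matrix (Fin 4) (Fin 4) ℂ :=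
  !![(1) + (-3) * u41 + (3) * u41^2 + (-1) * u41^3, (1) * u41 + (-2) * u41^2 + (1) * u41^3, (1) * u41^2 + (-1) * u41^3, (1) * u41^3;
   (-3) + (6) * u41 + (-3) * u41^2, (1) + (-4) * u41 + (3) * u41^2, (2) * u41 + (-3) * u41^2, (3) * u41^2;
   (3) + (-3) * u41, (-2) + (3) * u41, (1) + (-3) * u41, (3) * u41;
   (-1), (1), (-1), (1)]

noncomputable def P5x : Matrix (Fin 4) (Fin 4) ℂ :=
  !![(1) + (-3) * u41 + (3) * u41^2 + (-1) * u41^3, (1) * u41^2 + (-2) * u41^3 + (1) * u41^4, (1) * u41^4 + (-1) * u41^5, (1) * u41^6;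
   (-3) + (6) * u41 + (-3) * u41^2, (1) + (-1) * u41 + (-3) * u41^2 + (3) * u41^3, (2) * u41^2 + (-3) * u41^4, (3) * u41^4 + (3) * u41^5;
   (3) + (-3) * u41, (-2) + (3) * u41^2, (1) + (1) * u41 + (-3) * u41^2 + (-3) * u41^3, (3) * u41^2 + (6) * u41^3 + (3) * u41^4;
   (-1), (1) + (1) * u41, (-1) + (-2) * u41 + (-1) * u41^2, (1) + (3) * u41 + (3) * u41^2 + (1) * u41^3]

noncomputable def P6x : Matrix (Fin 4) (Fin 4) ℂ :=
  !![(1) + (-3) * u41 + (6) * u41^2 + (-7) * u41^3 + (6) * u41^4 + (-3) * u41^5 + (1) * u41^6, (1) * u41^2 + (-2) * u41^3 + (3) * u41^4 + (-2) * u41^5 + (1) * u41^6, (1) * u41^4 + (-1) * u41^5 + (1) * u41^6, (1) * u41^6;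
   (3) * u41 + (-6) * u41^2 + (9) * u41^3 + (-6) * u41^4 + (3) * u41^5, (1) + (-1) * u41 + (1) * u41^2 + (3) * u41^3 + (-3) * u41^4 + (3) * u41^5, (2) * u41^2 + (3) * u41^5, (3) * u41^4 + (3) * u41^5;
   (3) * u41^2 + (-3) * u41^3 + (3) * u41^4, (2) * u41 + (3) * u41^4, (1) + (1) * u41 + (3) * u41^3 + (3) * u41^4, (3) * u41^2 + (6) * u41^3 + (3) * u41^4;
   (1) * u41^3, (1) * u41^2 + (1) * u41^3, (1) * u41 + (2) * u41^2 + (1) * u41^3, (1) + (3) * u41 + (3) * u41^2 + (1) * u41^3]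

lemma hP1 : A4 * B4i = P1x := by
  ext i j
  fin_cases i <;> fin_cases j <;>
    (simp [A4, A4i, B4, B4i, P1x, P2x, P3x, P4x, P5x, P6x, Matrix.mul_apply, Fin.sum_univ_four,
      Matrix.vecHead, Matrix.vecTail]; try ring)

lemma hP2 : P1x * A4i = P2x := by
  ext i j
  fin_cases i <;> fin_cases j <;>
    (simp [A4, A4i, B4, B4i, P1x, P2x, P3x, P4x, P5x, P6x, Matrix.mul_apply, Fin.sum_univ_four,
      Matrix.vecHead, Matrix.vecTail]; try ring)

lemma hP3 : P2x * B4 = P3x := by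
  ext i j
  fin_cases i <;> fin_cases j <;>
    (simp [A4, A4i, B4, B4i, P1x, P2x, P3x, P4x, P5x, P6x, Matrix.mul_apply, Fin.sum_univ_four,
      Matrix.vecHead, Matrix.vecTail]; try ring)

lemma hP4 : B4 * A4 = P4x := by
  ext i j
  fin_cases i <;> fin_cases j <;>
    (simp [A4, A4i, B4, B4i, P1x, P2x, P3x, P4x, P5x, P6x, Matrix.mul_apply, Fin.sum_univ_four,
      Matrix.vecHead, Matrix.vecTail]; try ring)

lemma hP5 : P4x * B4i = P5x := by
  ext i j
  fin_cases i <;> fin_cases j <;>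
    (simp [A4, A4i, B4, B4i, P1x, P2x, P3x, P4x, P5x, P6x, Matrix.mul_apply, Fin.sum_univ_four,
      Matrix.vecHead, Matrix.vecTail]; try ring)

lemma hP6 : P5x * A4i = P6x := by
  ext i j
  fin_cases i <;> fin_cases j <;>
    (simp [A4, A4i, B4, B4i, P1x, P2x, P3x, P4x, P5x, P6x, Matrix.mul_apply, Fin.sum_univ_four,
      Matrix.vecHead, Matrix.vecTail]; try ring)

noncomputable def R2 : Matrix (Fin 4) (Fin 4) ℂ :=
  !![((-3) + (-6) * u41), ((-3) + (-3) * u41), ((-2) + (-1) * u41), ((-1));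
   ((9) + (9) * u41), ((7) + (2) * u41), ((3) + (-2) * u41), ((-3) * u41);
   ((-6) + (-3) * u41), ((-3) + (2) * u41), ((1) + (4) * u41), ((3) + (3) * u41);
   ((1)), ((-1) * u41), ((-1) + (-1) * u41), ((-1))]

noncomputable def R3 : Matrix (Fin 4) (Fin 4) ℂ :=
  !![((-3) + (-6) * u41), ((3)), ((1) + (2) * u41), ((-1));
   ((9) + (9) * u41), ((-2) + (2) * u41), ((-1) + (-1) * u41), (0);
   ((-6) + (-3) * u41), ((-1) * u41), (0), (0);
   ((1)), (0), (0), (0)]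

noncomputable def R6 : Matrix (Fin 4) (Fin 4) ℂ :=
  !![((-8)), ((4) * u41), ((2) + (2) * u41), ((1));
   ((12)), ((-8) * u41), ((-5) + (-5) * u41), ((-3));
   ((-6)), ((5) * u41), ((4) + (4) * u41), ((3));
   ((1)), ((-1) * u41), ((-1) + (-1) * u41), ((-1))]

noncomputable def B4r : Matrix (Fin 4) (Fin 4) ℂ :=
  !![((1)), ((1) * u41), ((-1) + (-1) * u41), ((1));
   (0), ((1)), ((2) * u41), ((-3) + (-3) * u41);
   (0), (0), ((1)), ((3) * u41);
   (0), (0), (0), ((1))]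

lemma hR2 : P2x = R2 := by
  ext i j
  fin_cases i <;> fin_cases j <;>
    simp [P2x, R2, Matrix.vecHead, Matrix.vecTail] <;>
    simp only [hu6, hu5, hu4, hu3, hu2] <;>
    ring1

lemma hR3 : P3x = R3 := by
  ext i j
  fin_cases i <;> fin_cases j <;>
    simp [P3x, R3, Matrix.vecHead, Matrix.vecTail] <;>
    simp only [hu6, hu5, hu4, hu3, hu2] <;>
    ring1

lemma hR6 : P6x = R6 := by
  ext i j
  fin_cases i <;> fin_cases j <;>
    simp [P6x, R6, Matrix.vecHead, Matrix.vecTail] <;>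
    simp only [hu6, hu5, hu4, hu3, hu2] <;>
    ring1

lemma hB4r : B4 = B4r := by
  ext i j
  fin_cases i <;> fin_cases j <;>
    simp [B4, B4r, Matrix.vecHead, Matrix.vecTail] <;>
    simp only [hu6, hu5, hu4, hu3, hu2] <;>
    ring1

set_option maxHeartbeats 2000000 in
theorem twisted_alexander_rho4 :
    ∀ t : ℂ, t ≠ 0 → t ≠ 1 →
      det ((1 : Matrix (Fin 4) (Fin 4) ℂ) - t⁻¹ • (A4 * B4⁻¹ * A4⁻¹) +
          A4 * B4⁻¹ * A4⁻¹ * B4 - t • B4 + B4 * A4 * B4⁻¹ * A4⁻¹) /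
        det (t • B4 - 1) =
      (1 / t ^ 4) * (t ^ 2 - 4 * t + 1) ^ 2 := by
  intro t ht ht1
  have hden : det (t • B4 - 1) = (t - 1) ^ 4 := by
    rw [detfour]
    simp [B4, one4, Matrix.smul_apply, Matrix.sub_apply, Matrix.vecHead, Matrix.vecTail]
    ring
  have hdne : ((t - 1) ^ 4 : ℂ) ≠ 0 := pow_ne_zero _ (sub_ne_zero.mpr ht1)
  rw [hB4inv, hA4inv, hden, div_eq_iff hdne]
  have hst : t * t⁻¹ = 1 := mul_inv_cancel₀ ht
  rw [mul_assoc B4 A4 B4i, ← mul_assoc, hP4, hP5, hP6, hP1, hP2]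
  rw [hP3, hR2, hR3, hR6, hB4r, detfour]
  simp [one4, R2, R3, R6, B4r, Matrix.vecHead, Matrix.vecTail]
  linear_combination (((-304) + (-144) * u41 + (256) * t⁻¹ + (120) * t⁻¹ * u41 + (-136) * t⁻¹^2 + (-72) * t⁻¹^2 * u41 + (32) * t⁻¹^3 + (24) * t⁻¹^3 * u41 + (256) * t + (120) * t * u41 + (-136) * t^2 + (-72) * t^2 * u41 + (32) * t^3 + (24) * t^3 * u41)) * hu41 + (((-253) + (-364) * u41 + (-412) * u41^2 + (-144) * u41^3 + (160) * t⁻¹ + (160) * t⁻¹ * u41 + (220) * t⁻¹ * u41^2 + (84) * t⁻¹ * u41^3 + (-59) * t⁻¹^2 + (-18) * t⁻¹^2 * u41 + (-34) * t⁻¹^2 * u41^2 + (-18) * t⁻¹^2 * u41^3 + (12) * t⁻¹^3 + (160) * t + (160) * t * u41 + (220) * t * u41^2 + (84) * t * u41^3 + (-173) * t * t⁻¹ + (-12) * t * t⁻¹ * u41 + (-52) * t * t⁻¹ * u41^2 + (-36) * t * t⁻¹ * u41^3 + (132) * t * t⁻¹^2 + (-56) * t * t⁻¹^3 + (-59) *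 t^2 + (-18) * t^2 * u41 + (-34) * t^2 * u41^2 + (-18) * t^2 * u41^3 + (132) * t^2 * t⁻¹ + (-174) * t^2 * t⁻¹^2 + (132) * t^2 * t⁻¹^3 + (12) * t^3 + (-56) * t^3 * t⁻¹ + (132) * t^3 * t⁻¹^2 + (-174) * t^3 * t⁻¹^3 + (-1) * t^4 + (12) * t^4 * t⁻¹ + (-56) * t^4 * t⁻¹^2 + (132) * t^4 * t⁻¹^3 + (-1) * t^5 * t⁻¹ + (12) * t^5 * t⁻¹^2 + (-56) * t^5 * t⁻¹^3 + (-1) * t^6 * t⁻¹^2 + (12) * t^6 * t⁻¹^3 + (-1) * t^7 * t⁻¹^3)) * hst
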